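/- In the SAT-reduction arena A_φ, if the memoryless strategy of player P corresponds to an assignment a satisfying all clauses of φ, then every play consistent with that strategy (against any strategy of player F) reaches the target set R = {(v, (C_m, ⊤))}. -/

import Mathlib

/-- Public components of the arena `A_φ`: `none` is the state `∞`, `some (j, a)` is `x_j^a`. -/
abbrev SatPub (n : ℕ) := Option (Fin (n + 1) × Bool)

/-- States of the arena `A_φ`: a public component together with the private component
`(C_k, α)` recording the current clause and whether it is already satisfied. -/
abbrev SatSta (n m : ℕ) := SatPub n × (Fin (m + 1) × Bool)

/-- Transition function of the arena `A_φ`: the players sequentially evaluate the clauses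
under the assignment played by `P`; a falsified clause leads to the losing sink
`(C_m, ⊥)`, and the states of the last clause at the final variable are sinks. -/
def satDelta (n m : ℕ) (cl : Fin (m + 1) → Finset (Fin (n + 1) × Bool)) :
    SatSta n m → Bool → Bool → SatSta n m := fun v a _b =>
  match v with
  | (none, (k, _)) =>
      (some (0, a), (k, decide (((0 : Fin (n + 1)), a) ∈ cl k)))
  | (some (j, c), (k, α)) =>
      if h : (j : ℕ) < n then
        (some (⟨(j : ℕ) + 1, by omega⟩, a),
          (k, α || decide (((⟨(j : ℕ) + 1, by omega⟩ : Fin (n + 1)), a) ∈ cl k)))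
      else
        if k = Fin.last m then (some (j, c), (k, α))
        else if α then (none, (k + 1, false))
        else (some (j, a), (Fin.last m, false))

/-- The play induced by a memoryless strategy `σ` of player `P` and a strategy `τ` of
player `F` (represented by its sequence of moves). -/
def satPlay (n m : ℕ) (cl : Fin (m + 1) → Finset (Fin (n + 1) × Bool))
    (σ : SatPub n → Bool) (τ : ℕ → Bool) : ℕ → SatSta n m
  | 0 => (none, (0, false))
  | i + 1 =>
      satDelta n m cl (satPlay n m cl σ τ i)
        (σ (satPlay n m cl σ τ i).1) (τ i)

/-- The memoryless strategy of player `P` corresponding to the assignment `a`. -/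
def stratOf (n : ℕ) (a : Fin (n + 1) → Bool) : SatPub n → Bool
  | none => a 0
  | some (j, _) => if h : (j : ℕ) < n then a ⟨(j : ℕ) + 1, by omega⟩ else true

lemma scan_lemma (n m : ℕ) (cl : Fin (m + 1) → Finset (Fin (n + 1) × Bool))
    (a : Fin (n + 1) → Bool) (τ : ℕ → Bool) (i : ℕ) (k : Fin (m + 1))
    (h : satPlay n m cl (stratOf n a) τ i = (none, (k, false))) :
    ∀ j : ℕ, (hj : j ≤ n) →
      satPlay n m cl (stratOf n a) τ (i + j + 1) =
        (some (⟨j, by omega⟩, a ⟨j, by omega⟩),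
          (k, decide (∃ l : Fin (n + 1), (l : ℕ) ≤ j ∧ (l, a l) ∈ cl k))) := by
  intro j
  induction j with
  | zero =>
    intro hj
    show satDelta n m cl _ _ _ = _
    rw [h]
    simp only [satDelta, stratOf]
    refine Prod.ext ?_ (Prod.ext rfl ?_)
    · simp [Fin.ext_iff]
    · show decide _ = decide _
      refine decide_eq_decide.mpr ?_
      constructor
      · intro hmem; exact ⟨0, by simp, hmem⟩
      · rintro ⟨l, hl, hmem⟩
        have : l = 0 := by ext; simpa using hl
        subst this; exact hmem
  | succ j ih =>
    intro hj
    have hji : j ≤ n := by omega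
    have prev := ih hji
    rw [show i + (j + 1) + 1 = (i + j + 1) + 1 from by omega]
    show satDelta n m cl _ _ _ = _
    rw [prev]
    simp only [satDelta, stratOf]
    rw [dif_pos (by omega : j < n), dif_pos (by omega : j < n)]
    have hB : (decide (∃ l : Fin (n + 1), (l : ℕ) ≤ j ∧ (l, a l) ∈ cl k) ||
        decide (((⟨j + 1, by omega⟩ : Fin (n + 1)), a ⟨j + 1, by omega⟩) ∈ cl k)) =
        decide (∃ l : Fin (n + 1), (l : ℕ) ≤ j + 1 ∧ (l, a l) ∈ cl k) := by
      rw [← Bool.decide_or, decide_eq_decide]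
      constructor
      · rintro (⟨l, hl, hmem⟩ | hmem)
        · exact ⟨l, by omega, hmem⟩
        · exact ⟨⟨j + 1, by omega⟩, le_refl _, hmem⟩
      · rintro ⟨l, hl, hmem⟩
        rcases Nat.lt_or_ge (l : ℕ) (j + 1) with h' | h'
        · exact Or.inl ⟨l, by omega, hmem⟩
        · right
          have : l = ⟨j + 1, by omega⟩ := by ext; simp; omega
          rw [this] at hmem; exact hmem
    rw [hB]

/-- If the memoryless strategy of `P` corresponds to an assignment satisfying all clauses,
then every play consistent with it reaches the target set `R = {(v, (C_m, ⊤))}`. -/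
theorem satisfying_assignment_wins_reachability (n m : ℕ)
    (cl : Fin (m + 1) → Finset (Fin (n + 1) × Bool)) (a : Fin (n + 1) → Bool)
    (hsat : ∀ k, ∃ j, (j, a j) ∈ cl k) :
    ∀ τ : ℕ → Bool, ∃ i,
      (satPlay n m cl (stratOf n a) τ i).2 = (Fin.last m, true) := by
  intro τ
  have key : ∀ t : ℕ, (ht : t ≤ m) → ∃ i,
      satPlay n m cl (stratOf n a) τ i = (none, (⟨t, by omega⟩, false)) := by
    intro t
    induction t with
    | zero => intro _; exact ⟨0, rfl⟩
    | succ t ih =>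
      intro ht
      obtain ⟨i, hi⟩ := ih (by omega)
      have hscan := scan_lemma n m cl a τ i ⟨t, by omega⟩ hi n le_rfl
      have htrue : (decide (∃ l : Fin (n + 1), (l : ℕ) ≤ n ∧ (l, a l) ∈ cl ⟨t, by omega⟩)) = true := by
        obtain ⟨j, hj⟩ := hsat ⟨t, by omega⟩
        exact decide_eq_true ⟨j, by omega, hj⟩
      refine ⟨i + n + 2, ?_⟩
      rw [show i + n + 2 = (i + n + 1) + 1 from by omega]
      show satDelta n m cl _ _ _ = _
      rw [hscan, htrue]
      simp only [satDelta]
      rw [dif_neg (by omega : ¬ n < n)]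
      rw [if_neg (by simp only [Fin.ext_iff, Fin.val_last]; omega)]
      rw [if_pos trivial]
      have h1 : (⟨t, by omega⟩ : Fin (m + 1)) + 1 = ⟨t + 1, by omega⟩ := by
        ext; simp [Fin.add_def]; omega
      rw [h1]
  obtain ⟨i, hi⟩ := key m le_rfl
  have hscan := scan_lemma n m cl a τ i ⟨m, by omega⟩ hi n le_rfl
  have htrue : (decide (∃ l : Fin (n + 1), (l : ℕ) ≤ n ∧ (l, a l) ∈ cl ⟨m, by omega⟩)) = true := by
    obtain ⟨j, hj⟩ := hsat ⟨m, by omega⟩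
    exact decide_eq_true ⟨j, by omega, hj⟩
  refine ⟨i + n + 1, ?_⟩
  rw [hscan, htrue]
  simp [Fin.last, Fin.ext_iff]
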